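/- For a cyclically ordered group G, the center of the Rieger unwound satisfies Z(uw(G)) = uw(Z(G)), and Z(uw(G))/\langle z_G \rangle is isomorphic to Z(G). -/

import Mathlib

/-- A cyclically ordered group: a ternary relation satisfying R1-R5. -/
def IsCyclicOrder {G : Type*} [Group G] (R : G → G → G → Prop) : Prop :=
  (∀ x y z : G, R x y z → x ≠ y ∧ y ≠ z ∧ z ≠ x) ∧
  (∀ x y z : G, x ≠ y → y ≠ z → z ≠ x → R x y z ∨ R x z y) ∧
  (∀ x y z : G, R x y z → R y z x) ∧
  (∀ x y z u : G, R x y z → R y u z → R x u z) ∧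
  (∀ x y z u v : G, R x y z → R (u * x * v) (u * y * v) (u * z * v))

open scoped Classical in
/-- The group law of the Rieger unwinding on `ℤ × G`:
`(k,g)·(m,h) = (k+m, g*h)` if `g = 1` or `h = 1` or `R 1 g (g*h)`,
`(k+m+1, g*h)` if `R 1 (g*h) g`, and `(k+m+1, 1)` if `g*h = 1 ≠ g`. -/
noncomputable def uwMul {G : Type*} [Group G] (R : G → G → G → Prop)
    (p q : ℤ × G) : ℤ × G :=
  if p.2 = 1 ∨ q.2 = 1 ∨ R 1 p.2 (p.2 * q.2) then (p.1 + q.1, p.2 * q.2)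
  else if R 1 (p.2 * q.2) p.2 then (p.1 + q.1 + 1, p.2 * q.2)
  else (p.1 + q.1 + 1, 1)

/-- The order of the Rieger unwinding on `ℤ × G`:
`(m,g) ≤ (m',g')` iff they are equal, or `m < m'`, or `m = m'` and (`R 1 g g'` or `g = 1`). -/
def uwLe {G : Type*} [Group G] (R : G → G → G → Prop) (p q : ℤ × G) : Prop :=
  p = q ∨ p.1 < q.1 ∨ (p.1 = q.1 ∧ (R 1 p.2 q.2 ∨ p.2 = 1))

section helpers
variable {G : Type*} [Group G] {R : G → G → G → Prop}

lemma uw_chain (hR : IsCyclicOrder R) {a b c : G} (hab : R 1 a b) (hbc : R 1 b c) :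
    R 1 a c := by
  obtain ⟨-, -, h3, h4, -⟩ := hR
  exact h3 _ _ _ (h3 _ _ _ (h4 a b 1 c (h3 _ _ _ hab) (h3 _ _ _ hbc)))

lemma uw_irrefl (hR : IsCyclicOrder R) {a : G} (h : R 1 a a) : False :=
  (hR.1 1 a a h).2.1 rfl

lemma uw_not_right_one (hR : IsCyclicOrder R) {a : G} (h : R 1 a 1) : False :=
  (hR.1 1 a 1 h).2.2 rfl

lemma uw_not_mid_one (hR : IsCyclicOrder R) {a : G} (h : R 1 1 a) : False :=
  (hR.1 1 1 a h).1 rfl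

lemma uw_inv_comm {g : G} (hg : ∀ x : G, g * x = x * g) (x : G) :
    g⁻¹ * x = x * g⁻¹ := by
  have h := congrArg (fun y => g⁻¹ * y * g⁻¹) (hg x)
  simpa [mul_assoc] using h.symm

lemma uw_key_aux (hR : IsCyclicOrder R) {g h : G} (hg : ∀ x : G, g * x = x * g)
    (A : R 1 g (g * h)) (B : R 1 (g * h) h) : False := by
  have hg' := uw_inv_comm hg
  have h3 := hR.2.2.1
  have h5 := hR.2.2.2.2
  have t1 : R 1 h g⁻¹ := by
    have t := h5 1 g (g * h) g⁻¹ 1 A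
    simp only [mul_one, one_mul, inv_mul_cancel, inv_mul_cancel_left] at t
    exact h3 _ _ _ t
  have t2 : R 1 g⁻¹ (g * h)⁻¹ := by
    have t := h5 1 (g * h) h (g * h)⁻¹ 1 B
    simp only [mul_one, one_mul, inv_mul_cancel] at t
    have e : (g * h)⁻¹ * h = g⁻¹ := by
      rw [mul_inv_rev, mul_assoc, hg', ← mul_assoc, inv_mul_cancel, one_mul]
    rw [e] at t
    exact h3 _ _ _ t
  have t3 : R 1 (g * h)⁻¹ h⁻¹ := by
    have t := h5 1 g (g * h) (g * h)⁻¹ 1 A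
    simp only [mul_one, one_mul, inv_mul_cancel] at t
    have e : (g * h)⁻¹ * g = h⁻¹ := by
      rw [mul_inv_rev, mul_assoc, inv_mul_cancel, mul_one]
    rw [e] at t
    exact h3 _ _ _ (h3 _ _ _ t)
  have t4 : R 1 h⁻¹ g := by
    have t := h5 1 (g * h) h 1 h⁻¹ B
    simp only [one_mul, mul_inv_cancel, mul_assoc, mul_one, inv_mul_cancel] at t
    exact h3 _ _ _ (h3 _ _ _ t)
  have t5 : R 1 g h := uw_chain hR A B
  exact uw_irrefl hR (uw_chain hR t1 (uw_chain hR t2 (uw_chain hR t3 (uw_chain hR t4 t5))))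

lemma uw_key_aux2 (hR : IsCyclicOrder R) {g h : G} (hg : ∀ x : G, g * x = x * g)
    (A : R 1 h (g * h)) (B : R 1 (g * h) g) : False := by
  have hg' := uw_inv_comm hg
  have h3 := hR.2.2.1
  have h5 := hR.2.2.2.2
  have s1 : R 1 g h⁻¹ := by
    have t := h5 1 h (g * h) h⁻¹ 1 A
    simp only [mul_one, one_mul, inv_mul_cancel] at t
    have e : h⁻¹ * (g * h) = g := by
      rw [hg h, ← mul_assoc, inv_mul_cancel, one_mul]
    rw [e] at t
    exact h3 _ _ _ t
  have s2 : R 1 h⁻¹ (g * h)⁻¹ := by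
    have t := h5 1 (g * h) g (g * h)⁻¹ 1 B
    simp only [mul_one, one_mul, inv_mul_cancel] at t
    have e : (g * h)⁻¹ * g = h⁻¹ := by
      rw [mul_inv_rev, mul_assoc, inv_mul_cancel, mul_one]
    rw [e] at t
    exact h3 _ _ _ t
  have s3 : R 1 (g * h)⁻¹ g⁻¹ := by
    have t := h5 1 h (g * h) (g * h)⁻¹ 1 A
    simp only [mul_one, one_mul, inv_mul_cancel] at t
    have e : (g * h)⁻¹ * h = g⁻¹ := by
      rw [mul_inv_rev, mul_assoc, hg', ← mul_assoc, inv_mul_cancel, one_mul]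
    rw [e] at t
    exact h3 _ _ _ (h3 _ _ _ t)
  have s4 : R 1 g⁻¹ h := by
    have t := h5 1 (g * h) g 1 g⁻¹ B
    simp only [one_mul, mul_inv_cancel] at t
    have e : g * h * g⁻¹ = h := by
      rw [hg, mul_assoc, mul_inv_cancel, mul_one]
    rw [e] at t
    exact h3 _ _ _ (h3 _ _ _ t)
  have s5 : R 1 h g := uw_chain hR A B
  exact uw_irrefl hR (uw_chain hR s1 (uw_chain hR s2 (uw_chain hR s3 (uw_chain hR s4 s5))))

lemma uw_key (hR : IsCyclicOrder R) {g h : G} (hg : ∀ x : G, g * x = x * g)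
    (hgne : g ≠ 1) (hhne : h ≠ 1) (hghne : g * h ≠ 1) :
    R 1 g (g * h) ↔ R 1 h (g * h) := by
  have hne1 : (1 : G) ≠ h := fun e => hhne e.symm
  have hne2 : h ≠ g * h := fun e => hgne (right_eq_mul.mp e)
  have hne3 : (1 : G) ≠ g := fun e => hgne e.symm
  have hne4 : g ≠ g * h := fun e => hhne (left_eq_mul.mp e)
  constructor
  · intro A
    by_contra hB
    have hB' : R 1 (g * h) h := (hR.2.1 1 h (g * h) hne1 hne2 hghne).resolve_left hB
    exact (uw_key_aux hR hg A hB').elim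
  · intro A
    by_contra hB
    have hB' : R 1 (g * h) g := (hR.2.1 1 g (g * h) hne3 hne4 hghne).resolve_left hB
    exact (uw_key_aux2 hR hg A hB').elim

end helpers

section main
variable {G : Type*} [Group G] {R : G → G → G → Prop}

lemma uwMul_snd (hR : IsCyclicOrder R) (p q : ℤ × G) :
    (uwMul R p q).2 = p.2 * q.2 := by
  unfold uwMul
  split_ifs with hc1 hc2
  · rfl
  · rfl
  · push_neg at hc1
    obtain ⟨hp, hq, hr⟩ := hc1
    show (1 : G) = p.2 * q.2
    by_contra hne
    rcases hR.2.1 1 p.2 (p.2 * q.2) (Ne.symm hp)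
        (fun e => hq (left_eq_mul.mp e)) (fun e => hne e.symm) with h | h
    · exact hr h
    · exact hc2 h

lemma uw_comm_of_center (hR : IsCyclicOrder R) (p : ℤ × G)
    (hp : p.2 ∈ Subgroup.center G) (q : ℤ × G) : uwMul R p q = uwMul R q p := by
  obtain ⟨k, g⟩ := p
  obtain ⟨m, h⟩ := q
  rw [Subgroup.mem_center_iff] at hp
  have hg : ∀ x, g * x = x * g := fun x => (hp x).symm
  have hgh : h * g = g * h := hp h
  show uwMul R (k, g) (m, h) = uwMul R (m, h) (k, g)
  unfold uwMul
  simp only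
  by_cases hg1 : g = 1
  · rw [if_pos (Or.inl hg1), if_pos (Or.inr (Or.inl hg1))]
    simp [hg1, add_comm]
  by_cases hh1 : h = 1
  · rw [if_pos (Or.inr (Or.inl hh1)), if_pos (Or.inl hh1)]
    simp [hh1, add_comm]
  by_cases hgh1 : g * h = 1
  · have hhg1 : h * g = 1 := by rw [hgh, hgh1]
    rw [if_neg, if_neg, if_neg, if_neg]
    · simp [add_comm, add_assoc, add_left_comm]
    · rw [hhg1]; exact fun hc => uw_not_mid_one hR hc
    · rintro (h1 | h1 | h1)
      · exact hh1 h1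
      · exact hg1 h1
      · rw [hhg1] at h1; exact uw_not_right_one hR h1
    · rw [hgh1]; exact fun hc => uw_not_mid_one hR hc
    · rintro (h1 | h1 | h1)
      · exact hg1 h1
      · exact hh1 h1
      · rw [hgh1] at h1; exact uw_not_right_one hR h1
  · have hkey := uw_key hR hg hg1 hh1 hgh1
    by_cases hA : R 1 g (g * h)
    · rw [if_pos (Or.inr (Or.inr hA)), if_pos]
      · rw [add_comm, hgh]
      · exact Or.inr (Or.inr (by rw [hgh]; exact hkey.mp hA))
    · have hB : ¬ R 1 h (h * g) := by rw [hgh]; exact fun t => hA (hkey.mpr t)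
      have hc2 : R 1 (g * h) g :=
        (hR.2.1 1 g (g * h) (fun e => hg1 e.symm)
          (fun e => hh1 (left_eq_mul.mp e)) hgh1).resolve_left hA
      have hc2' : R 1 (h * g) h := by
        rw [hgh]
        exact (hR.2.1 1 h (g * h) (fun e => hh1 e.symm)
          (fun e => hg1 (right_eq_mul.mp e)) hgh1).resolve_left
          (fun t => hA (hkey.mpr t))
      have n1 : ¬ (g = 1 ∨ h = 1 ∨ R 1 g (g * h)) := by
        rintro (h1 | h1 | h1)
        · exact hg1 h1
        · exact hh1 h1
        · exact hA h1
      have n2 : ¬ (h = 1 ∨ g = 1 ∨ R 1 h (h * g)) := by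
        rintro (h1 | h1 | h1)
        · exact hh1 h1
        · exact hg1 h1
        · exact hB h1
      rw [if_neg n1, if_pos hc2, if_neg n2, if_pos hc2']
      rw [add_comm k m, hgh]

theorem uw_center_aux (hR : IsCyclicOrder R) :
    (∀ p : ℤ × G,
      (∀ q : ℤ × G, uwMul R p q = uwMul R q p) ↔ p.2 ∈ Subgroup.center G) ∧
    (∀ p q : ℤ × G, p.2 ∈ Subgroup.center G → q.2 ∈ Subgroup.center G →
      (uwMul R p q).2 = p.2 * q.2) ∧
    (∀ g ∈ Subgroup.center G, ∃ p : ℤ × G,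
      (∀ q : ℤ × G, uwMul R p q = uwMul R q p) ∧ p.2 = g) ∧
    (∀ p : ℤ × G, (∀ q : ℤ × G, uwMul R p q = uwMul R q p) →
      (p.2 = 1 ↔ ∃ n : ℤ, p = (n, (1 : G)))) := by
  have main : ∀ p : ℤ × G,
      (∀ q : ℤ × G, uwMul R p q = uwMul R q p) ↔ p.2 ∈ Subgroup.center G := by
    intro p
    constructor
    · intro hcomm
      rw [Subgroup.mem_center_iff]
      intro h
      have := congrArg Prod.snd (hcomm (0, h))
      rw [uwMul_snd hR, uwMul_snd hR] at this
      exact this.symm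
    · intro hp
      exact uw_comm_of_center hR p hp
  refine ⟨main, ?_, ?_, ?_⟩
  · intro p q _ _; exact uwMul_snd hR p q
  · intro g hg
    exact ⟨(0, g), (main (0, g)).mpr hg, rfl⟩
  · intro p _
    constructor
    · intro h2
      exact ⟨p.1, Prod.ext rfl h2⟩
    · rintro ⟨n, rfl⟩; rfl

end main

/-- The center of the Rieger unwound is `uw(Z(G))`, and the second projection
realizes `Z(uw(G))/⟨z_G⟩ ≅ Z(G)`: it maps central elements of `uw(G)`
multiplicatively onto `Z(G)`, with kernel exactly `⟨z_G⟩ = ℤ × {1}`. -/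
theorem uw_center {G : Type*} [Group G] (R : G → G → G → Prop)
    (hR : IsCyclicOrder R) :
    (∀ p : ℤ × G,
      (∀ q : ℤ × G, uwMul R p q = uwMul R q p) ↔ p.2 ∈ Subgroup.center G) ∧
    (∀ p q : ℤ × G, p.2 ∈ Subgroup.center G → q.2 ∈ Subgroup.center G →
      (uwMul R p q).2 = p.2 * q.2) ∧
    (∀ g ∈ Subgroup.center G, ∃ p : ℤ × G,
      (∀ q : ℤ × G, uwMul R p q = uwMul R q p) ∧ p.2 = g) ∧
    (∀ p : ℤ × G, (∀ q : ℤ × G, uwMul R p q = uwMul R q p) →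
      (p.2 = 1 ↔ ∃ n : ℤ, p = (n, (1 : G)))) := by
  exact uw_center_aux hR
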